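/- Let B > 0, T > 0, let 0 < m < 2, set M := m·√(B·T), θ* := arccos(m − 1), and V(θ) := (M²/(2B))·(1 − cos θ)/(1 + cos θ) − T·(1 − cos θ). Then V(θ*) = −T·(2 − m)²/2, which is strictly negative, while V(0) = 0. Hence the helical equilibrium lies strictly below the trivial state in the oscillator potential, and equivalently the structural potential-energy density of the helix exceeds that of the trivial straight rod by T·(2 − m)²/2 > 0 for every 0 < m < 2 (so the free rod has no Maxwell load). -/
import Mathlib


/-- At the helical equilibrium `θ* = arccos(m − 1)` of the stretched and
twisted rod (`0 < m < 2`, `M = m√(BT)`), the equivalent-oscillator potential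
takes the value `V(θ*) = −T(2 − m)²/2 < 0`, while `V(0) = 0`: the helix lies
strictly below the trivial state in the oscillator potential, so the
structural potential-energy density of the helix exceeds that of the straight
rod by `T(2 − m)²/2 > 0` and the free rod has no Maxwell load. -/
theorem rod_helix_energy_no_maxwell_load
    (B T m : ℝ) (hB : 0 < B) (hT : 0 < T) (hm0 : 0 < m) (hm2 : m < 2)
    (M : ℝ) (hM : M = m * Real.sqrt (B * T))
    (θstar : ℝ) (hθ : θstar = Real.arccos (m - 1))
    (V : ℝ → ℝ)
    (hV : V = fun θ =>
      M ^ 2 / (2 * B) * ((1 - Real.cos θ) / (1 + Real.cos θ)) - T * (1 - Real.cos θ)) :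
    V θstar = -(T * (2 - m) ^ 2 / 2) ∧ V θstar < 0 ∧ V 0 = 0 := by
  have hcos : Real.cos θstar = m - 1 := by
    rw [hθ, Real.cos_arccos] <;> nlinarith
  have hM2 : M ^ 2 = m ^ 2 * (B * T) := by
    rw [hM, mul_pow, Real.sq_sqrt (by positivity)]
  have h1 : V θstar = -(T * (2 - m) ^ 2 / 2) := by
    rw [hV]
    simp only [hcos]
    rw [hM2]
    have : (1 : ℝ) + (m - 1) = m := by ring
    rw [this]
    field_simp
    ring
  refine ⟨h1, ?_, ?_⟩
  · rw [h1]
    have : (0:ℝ) < T * (2 - m) ^ 2 / 2 := by nlinarith [mul_pos hT (mul_pos (by linarith : (0:ℝ) < 2 - m) (by linarith : (0:ℝ) < 2 - m))]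
    linarith
  · rw [hV]; simp
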